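/- Let K and V be types, let m be a natural number, and let k : Fin m → K assign keys to write positions. If a schedule π (a permutation of Fin m) preserves per-key order — for all positions i, j with k i = k j and i < j, one has π i < π j — then π is valid: for every value assignment v : Fin m → V, executing the writes in schedule order produces the same final state (as a function K → Option V) as executing them in serial log order. -/

import Mathlib

/-- The state (`K → Option V`) produced by executing the `m` writes of the log
`k : Fin m → K` with values `v : Fin m → V` according to the schedule `π`
(a permutation of `Fin m`): starting from the everywhere-`none` map, for each
step `s = 0, 1, …, m−1` in increasing order, update the map at key
`k (π⁻¹ s)` to `some (v (π⁻¹ s))`. -/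
def execState {K V : Type*} [DecidableEq K] {m : ℕ} (k : Fin m → K) (v : Fin m → V)
    (π : Equiv.Perm (Fin m)) : K → Option V :=
  (List.finRange m).foldl
    (fun st s => Function.update st (k (π.symm s)) (some (v (π.symm s))))
    (fun _ => none)

/-- foldl-update characterization: the result at key `q` is determined by the
last element of the list whose key is `q`. -/
lemma foldl_update_getLast {K V α : Type*} [DecidableEq K]
    (key : α → K) (val : α → V) (q : K) :
    ∀ (l : List α) (st0 : K → Option V),
      (l.foldl (fun st s => Function.update st (key s) (some (val s))) st0) q
        = ((l.filter (fun s => decide (key s = q))).getLast?).elim (st0 q)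
            (fun s => some (val s)) := by
  intro l
  induction l with
  | nil => intro st0; simp
  | cons a t ih =>
    intro st0
    rw [List.foldl_cons, ih]
    by_cases ha : key a = q
    · rw [List.filter_cons_of_pos (by simpa using ha)]
      cases h : (t.filter (fun s => decide (key s = q))).getLast? with
      | none =>
        rw [List.getLast?_eq_none_iff] at h
        simp [h, Function.update, ha]
      | some b =>
        have hne : (t.filter (fun s => decide (key s = q))) ≠ [] := by
          intro hnil; rw [hnil] at h; simp at h
        cases hl : t.filter (fun s => decide (key s = q)) with
        | nil => exact absurd hl hne
        | cons c u =>
          rw [hl] at h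
          rw [List.getLast?_cons_cons, h]
          simp
    · rw [List.filter_cons_of_neg (by simpa using ha)]
      cases h : (t.filter (fun s => decide (key s = q))).getLast? with
      | none =>
        simp only [h, Option.elim, Function.update]
        rw [dif_neg (fun hq => ha hq.symm)]
      | some b => simp [h]

/-- For a strictly sorted list, `getLast? = some x` iff `x` is the maximum. -/
lemma sorted_getLast?_eq_some_iff {α : Type*} [LinearOrder α] :
    ∀ {l : List α}, l.Pairwise (· < ·) → ∀ {x : α},
      l.getLast? = some x ↔ x ∈ l ∧ ∀ y ∈ l, y ≤ x := by
  intro l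
  induction l with
  | nil => simp
  | cons a t ih =>
    intro hs x
    cases t with
    | nil =>
      simp only [List.getLast?_singleton, List.mem_singleton, List.forall_mem_singleton,
        Option.some.injEq]
      constructor
      · rintro h'
        subst h'
        exact ⟨rfl, fun y hy => le_of_eq hy⟩
      · rintro ⟨rfl, _⟩
        rfl
    | cons b u =>
      have hs' : (b :: u).Pairwise (· < ·) := hs.of_cons
      have hab : ∀ y ∈ b :: u, a < y := fun y hy => (List.pairwise_cons.mp hs).1 y hy
      rw [List.getLast?_cons_cons, ih hs']
      constructor
      · rintro ⟨hx, hmax⟩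
        refine ⟨List.mem_cons_of_mem _ hx, ?_⟩
        intro y hy
        rcases List.mem_cons.mp hy with rfl | hy'
        · exact le_of_lt (hab x hx)
        · exact hmax y hy'
      · rintro ⟨hx, hmax⟩
        rcases List.mem_cons.mp hx with rfl | hx'
        · exact absurd (hmax b (by simp)) (not_le.mpr (hab b (by simp)))
        · exact ⟨hx', fun y hy => hmax y (List.mem_cons_of_mem _ hy)⟩

/-- If a schedule `π` preserves per-key order, then it is valid: for every
value assignment, executing the writes in schedule order produces the same
final state as serial log order (the identity schedule). -/
theorem per_key_order_preserving_schedule_is_valid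
    {K V : Type*} [DecidableEq K] {m : ℕ} (k : Fin m → K)
    (π : Equiv.Perm (Fin m))
    (horder : ∀ i j : Fin m, k i = k j → i < j → π i < π j) :
    ∀ v : Fin m → V, execState k v π = execState k v 1 := by
  intro v
  funext q
  have h1 : execState k v π q
      = (((List.finRange m).filter (fun s => decide (k (π.symm s) = q))).getLast?).elim
          none (fun s => some (v (π.symm s))) :=
    foldl_update_getLast (fun s => k (π.symm s)) (fun s => v (π.symm s)) q _ _
  have h2 : execState k v 1 q
      = (((List.finRange m).filter (fun s => decide (k s = q))).getLast?).elim
          none (fun s => some (v s)) := by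
    have := foldl_update_getLast (K := K) (fun s : Fin m => k ((1 : Equiv.Perm (Fin m)).symm s))
      (fun s => v ((1 : Equiv.Perm (Fin m)).symm s)) q (List.finRange m) (fun _ => none)
    exact this
  rw [h1, h2]
  have hsorted : (List.finRange m).Pairwise (· < ·) := List.pairwise_lt_finRange m
  have hs2 : ((List.finRange m).filter (fun s => decide (k s = q))).Pairwise (· < ·) :=
    hsorted.filter _
  have hs1 : ((List.finRange m).filter (fun s => decide (k (π.symm s) = q))).Pairwise (· < ·) :=
    hsorted.filter _
  cases h : ((List.finRange m).filter (fun s => decide (k s = q))).getLast? with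
  | none =>
    rw [List.getLast?_eq_none_iff] at h
    have hempty : ∀ i : Fin m, ¬ (k i = q) := by
      intro i hi
      have : i ∈ (List.finRange m).filter (fun s => decide (k s = q)) := by
        simp [List.mem_filter, hi]
      rw [h] at this; exact absurd this (List.not_mem_nil (a := i))
    have h1nil : (List.finRange m).filter (fun s => decide (k (π.symm s) = q)) = [] := by
      rw [List.filter_eq_nil_iff]
      intro s _
      simpa using hempty (π.symm s)
    rw [h1nil]
    rfl
  | some a =>
    have ha := (sorted_getLast?_eq_some_iff hs2).mp h
    have hka : k a = q := by
      have := List.mem_filter.mp ha.1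
      simpa using this.2
    have : ((List.finRange m).filter (fun s => decide (k (π.symm s) = q))).getLast?
        = some (π a) := by
      rw [sorted_getLast?_eq_some_iff hs1]
      constructor
      · rw [List.mem_filter]
        refine ⟨List.mem_finRange _, by simp [hka]⟩
      · intro y hy
        have hky : k (π.symm y) = q := by
          have := List.mem_filter.mp hy
          simpa using this.2
        have hmem : π.symm y ∈ (List.finRange m).filter (fun s => decide (k s = q)) := by
          simp [List.mem_filter, hky]
        have hle : π.symm y ≤ a := ha.2 _ hmem
        rcases lt_or_eq_of_le hle with hlt | heq
        · have := horder (π.symm y) a (by rw [hky, hka]) hlt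
          simpa using le_of_lt this
        · rw [← heq]; simp
    rw [this]
    simp
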